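/- (Optimal Regime Survival Rate.) Let b > d ≥ 0, r := b−d > 0, T > 0, and δ := e^{−rT}. Define the 2×2 real matrices Q̄₁ := [[δb−d, d(1−δ)], [b(δ−1), b−δd]] and Q̄_δ := [[2δb−δd−b, b(1−δ)], [b(δ−1), b−δd]]. Then for every integer n ≥ 1, the entry (Q̄₁·Q̄_δ^{n−1})₁₁ is nonzero and 1 − (Q̄₁·Q̄_δ^{n−1})₀₁/(Q̄₁·Q̄_δ^{n−1})₁₁ = r/(b·n·(1−δ) + δ·r). -/

import Mathlib

open Real Matrix

/-- Optimal regime survival rate: with `δ = e^{-rT}` the optimal dilution factor and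
`Q̄₁, Q̄_δ` the rescaled coefficient matrices of the per-cycle generating functions,
for every `n ≥ 1` the entry `(Q̄₁·Q̄_δ^{n-1})₁₁` is nonzero and
`1 - (Q̄₁·Q̄_δ^{n-1})₀₁/(Q̄₁·Q̄_δ^{n-1})₁₁ = r/(b·n·(1-δ) + δ·r)`. -/
theorem optimal_regime_survival_rate
    (b d r T δ : ℝ)
    (hb : d < b) (hd : 0 ≤ d) (hr : r = b - d) (hT : 0 < T)
    (hδ : δ = exp (-r * T))
    (Q1 Qδ : Matrix (Fin 2) (Fin 2) ℝ)
    (hQ1 : Q1 = !![δ * b - d, d * (1 - δ); b * (δ - 1), b - δ * d])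
    (hQδ : Qδ = !![2 * δ * b - δ * d - b, b * (1 - δ); b * (δ - 1), b - δ * d]) :
    ∀ n : ℕ, 1 ≤ n →
      (Q1 * Qδ ^ (n - 1)) 1 1 ≠ 0 ∧
      1 - (Q1 * Qδ ^ (n - 1)) 0 1 / (Q1 * Qδ ^ (n - 1)) 1 1 =
        r / (b * n * (1 - δ) + δ * r) := by
  subst hr hQ1 hQδ
  have hrpos : 0 < b - d := sub_pos.mpr hb
  have hbpos : 0 < b := lt_of_le_of_lt hd hb
  have hδpos : 0 < δ := hδ ▸ Real.exp_pos _
  have hδ1 : δ < 1 := by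
    rw [hδ, Real.exp_lt_one_iff]
    nlinarith
  set A := !![δ * b - d, d * (1 - δ); b * (δ - 1), b - δ * d] with hA
  set B := !![2 * δ * b - δ * d - b, b * (1 - δ); b * (δ - 1), b - δ * d] with hB
  have key : ∀ m : ℕ, A * B ^ m =
      !![ (δ * (b - d)) ^ m * ((δ * b - d) - m * (1 - δ) * b),
          (δ * (b - d)) ^ m * (d * (1 - δ) + m * (1 - δ) * b);
          (δ * (b - d)) ^ m * (b * (δ - 1) - m * (1 - δ) * b),
          (δ * (b - d)) ^ m * ((b - δ * d) + m * (1 - δ) * b) ] := by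
    intro m
    induction m with
    | zero => simp [hA]
    | succ k ih =>
      rw [pow_succ, ← mul_assoc, ih, hB, Matrix.mul_fin_two]
      push_cast
      congr 1 <;> ring
  intro n hn
  obtain ⟨m, rfl⟩ := Nat.exists_eq_add_of_le hn
  have hm : 1 + m - 1 = m := by omega
  rw [hm, key m]
  have hDpos : 0 < (δ * (b - d)) ^ m * ((b - δ * d) + m * (1 - δ) * b) := by
    apply mul_pos (pow_pos (mul_pos hδpos hrpos) m)
    have h1 : (0:ℝ) ≤ (m : ℝ) * (1 - δ) * b :=
      mul_nonneg (mul_nonneg (Nat.cast_nonneg m) (by linarith)) hbpos.le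
    nlinarith
  have hD : (δ * (b - d)) ^ m * ((b - δ * d) + m * (1 - δ) * b) ≠ 0 := ne_of_gt hDpos
  have hden : b * (↑(1 + m) : ℝ) * (1 - δ) + δ * (b - d) ≠ 0 := by
    push_cast
    have h1 : (0:ℝ) ≤ (m : ℝ) * (1 - δ) * b :=
      mul_nonneg (mul_nonneg (Nat.cast_nonneg m) (by linarith)) hbpos.le
    nlinarith
  constructor
  · simpa using hD
  · have h01 : (!![ (δ * (b - d)) ^ m * ((δ * b - d) - m * (1 - δ) * b),
          (δ * (b - d)) ^ m * (d * (1 - δ) + m * (1 - δ) * b);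
          (δ * (b - d)) ^ m * (b * (δ - 1) - m * (1 - δ) * b),
          (δ * (b - d)) ^ m * ((b - δ * d) + m * (1 - δ) * b) ] : Matrix (Fin 2) (Fin 2) ℝ) 0 1
        = (δ * (b - d)) ^ m * (d * (1 - δ) + m * (1 - δ) * b) := by simp
    have h11 : (!![ (δ * (b - d)) ^ m * ((δ * b - d) - m * (1 - δ) * b),
          (δ * (b - d)) ^ m * (d * (1 - δ) + m * (1 - δ) * b);
          (δ * (b - d)) ^ m * (b * (δ - 1) - m * (1 - δ) * b),
          (δ * (b - d)) ^ m * ((b - δ * d) + m * (1 - δ) * b) ] : Matrix (Fin 2) (Fin 2) ℝ) 1 1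
        = (δ * (b - d)) ^ m * ((b - δ * d) + m * (1 - δ) * b) := by simp
    rw [h01, h11, sub_div' hD, div_eq_div_iff hD hden]
    push_cast
    ring
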